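/- For every stochastic matrix p on a nonempty finite set S and every real number α with 0 ≤ α ≤ α(p), where α(p) = Σ_j min_i p(i,j) is Doeblin's ergodicity coefficient, there exist a stochastic matrix E on S all of whose rows are identical and a stochastic matrix M on S such that p = α·E + (1−α)·M. -/

import Mathlib

/-- A stochastic matrix on a finite set `S`: nonnegative entries, each row sums to 1. -/
def IsStochastic {S : Type*} [Fintype S] (p : Matrix S S ℝ) : Prop :=
  (∀ i j, 0 ≤ p i j) ∧ ∀ i, ∑ j, p i j = 1

/-- A matrix all of whose rows are identical. -/
def IsConstRow {S : Type*} (E : Matrix S S ℝ) : Prop :=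
  ∀ i i' j, E i j = E i' j

/-- Doeblin's ergodicity coefficient `α(p) = Σ_j min_i p(i,j)`. -/
noncomputable def doeblin {S : Type*} [Fintype S] [Nonempty S] (p : Matrix S S ℝ) : ℝ :=
  ∑ j, Finset.univ.inf' Finset.univ_nonempty fun i => p i j

theorem doeblin_decomposition {S : Type*} [Fintype S] [Nonempty S]
    (p : Matrix S S ℝ) (hp : IsStochastic p)
    (α : ℝ) (hα0 : 0 ≤ α) (hα1 : α ≤ doeblin p) :
    ∃ E M : Matrix S S ℝ, IsStochastic E ∧ IsConstRow E ∧ IsStochastic M ∧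
      p = α • E + (1 - α) • M := by
  obtain ⟨hpnn, hps⟩ := hp
  set m : S → ℝ := fun j => Finset.univ.inf' Finset.univ_nonempty fun i => p i j with hm
  have hmle : ∀ i j, m j ≤ p i j := fun i j => Finset.inf'_le _ (Finset.mem_univ i)
  have hm0 : ∀ j, 0 ≤ m j := fun j => Finset.le_inf' _ _ (fun i _ => hpnn i j)
  have hβ : doeblin p = ∑ j, m j := rfl
  have i₀ : S := Classical.arbitrary S
  have hβ1 : doeblin p ≤ 1 := by
    rw [hβ, ← hps i₀]
    exact Finset.sum_le_sum fun j _ => hmle i₀ j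
  rcases eq_or_lt_of_le hα0 with h0 | h0
  · refine ⟨fun _ j => p i₀ j, p, ⟨fun i j => hpnn _ j, fun i => hps _⟩,
      fun i i' j => rfl, ⟨hpnn, hps⟩, ?_⟩
    funext i j
    change p i j = α * p i₀ j + (1 - α) * p i j
    simp [← h0]
  rcases lt_or_eq_of_le (hα1.trans hβ1) with h1 | h1
  · -- 0 < α < 1
    have hβpos : 0 < doeblin p := lt_of_lt_of_le h0 hα1
    set β := doeblin p with hβdef
    refine ⟨fun _ j => m j / β, fun i j => (p i j - α * (m j / β)) / (1 - α), ?_, ?_, ?_, ?_⟩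
    · constructor
      · exact fun i j => div_nonneg (hm0 j) hβpos.le
      · intro i
        rw [← Finset.sum_div, ← hβ, div_self hβpos.ne']
    · exact fun i i' j => rfl
    · have key : ∀ i j, α * (m j / β) ≤ p i j := by
        intro i j
        calc α * (m j / β) ≤ β * (m j / β) :=
              mul_le_mul_of_nonneg_right hα1 (div_nonneg (hm0 j) hβpos.le)
          _ = m j := by field_simp
          _ ≤ p i j := hmle i j
      constructor
      · exact fun i j => div_nonneg (sub_nonneg.mpr (key i j)) (by linarith)
      · intro i
        rw [← Finset.sum_div, Finset.sum_sub_distrib, hps, ← Finset.mul_sum,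
          ← Finset.sum_div, ← hβ, div_self hβpos.ne']
        rw [mul_one]
        exact div_self (by linarith : (0:ℝ) < 1 - α).ne'
    · funext i j
      have h1' : (1 : ℝ) - α ≠ 0 := by linarith
      change p i j = α * (m j / β) + (1 - α) * ((p i j - α * (m j / β)) / (1 - α))
      field_simp
      ring
  · -- α = 1, so β = 1 and p is const-row
    have hβeq : doeblin p = 1 := le_antisymm hβ1 (h1 ▸ hα1)
    have hall : ∀ i j, p i j = m j := by
      intro i j
      have hsum : ∑ j, m j = ∑ j, p i j := by rw [← hβ, hβeq, hps]
      exact ((Finset.sum_eq_sum_iff_of_le (fun j _ => hmle i j)).mp hsum j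
        (Finset.mem_univ j)).symm
    refine ⟨p, p, ⟨hpnn, hps⟩, fun i i' j => by rw [hall i j, hall i' j], ⟨hpnn, hps⟩, ?_⟩
    funext i j
    simp [h1]
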